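/- For α > 1, β ≥ 1, a finite set Y, a full-support probability distribution q on Y, a finite set X, a probability distribution P̃ on X, and a row-stochastic kernel W : X → (Y → ℝ≥0) (i.e., each W(x,·) is a probability distribution), we have ∑_y q(y)^(1-β) (∑_x P̃(x) W(x,y)^α)^(β/α) ≥ 1, with the special case q = W(x',·) giving nonnegativity of maximal α,β-leakage. -/
import Mathlib

open Finset Real

theorem stmt3 {X Y : Type*} [Fintype X] [Nonempty X] [Fintype Y] [Nonempty Y]
    (W : X → Y → ℝ) (hW : ∀ x y, 0 ≤ W x y) (hWsum : ∀ x, ∑ y, W x y = 1)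
    (q : Y → ℝ) (hq : ∀ y, 0 < q y) (hqsum : ∑ y, q y = 1)
    (Pt : X → ℝ) (hPt : ∀ x, 0 ≤ Pt x) (hPtsum : ∑ x, Pt x = 1)
    {α β : ℝ} (hα : 1 < α) (hβ : 1 ≤ β) :
    1 ≤ ∑ y, q y ^ (1 - β) * (∑ x, Pt x * W x y ^ α) ^ (β / α) := by
  set M : Y → ℝ := fun y => ∑ x, Pt x * W x y with hMdef
  have hM0 : ∀ y, 0 ≤ M y := fun y =>
    Finset.sum_nonneg fun x _ => mul_nonneg (hPt x) (hW x y)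
  have hMsum : ∑ y, M y = 1 := by
    simp only [hMdef]
    rw [Finset.sum_comm]
    simp_rw [← Finset.mul_sum, hWsum, mul_one, hPtsum]
  have hα0 : (0:ℝ) < α := lt_trans one_pos hα
  -- Step 1: Jensen for t ↦ t^α
  have step1 : ∀ y, M y ^ α ≤ ∑ x, Pt x * W x y ^ α := fun y =>
    Real.rpow_arith_mean_le_arith_mean_rpow Finset.univ Pt (fun x => W x y)
      (fun x _ => hPt x) hPtsum (fun x _ => hW x y) hα.le
  -- Step 2: M y ^ β ≤ (∑ x, Pt x * W x y ^ α) ^ (β / α)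
  have step2 : ∀ y, M y ^ β ≤ (∑ x, Pt x * W x y ^ α) ^ (β / α) := by
    intro y
    have h1 : M y ^ β = (M y ^ α) ^ (β / α) := by
      rw [← Real.rpow_mul (hM0 y)]
      congr 1
      field_simp
    rw [h1]
    exact Real.rpow_le_rpow (Real.rpow_nonneg (hM0 y) α) (step1 y)
      (div_nonneg (le_trans one_pos.le hβ) hα0.le)
  -- Jensen for t ↦ t^β with weights q
  have jensen2 : (1:ℝ) ≤ ∑ y, q y * (M y / q y) ^ β := by
    have h := Real.rpow_arith_mean_le_arith_mean_rpow Finset.univ q (fun y => M y / q y)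
      (fun y _ => (hq y).le) hqsum (fun y _ => div_nonneg (hM0 y) (hq y).le) hβ
    have heq : ∑ y, q y * (M y / q y) = 1 := by
      rw [← hMsum]
      exact Finset.sum_congr rfl fun y _ => mul_div_cancel₀ (M y) (hq y).ne'
    rw [heq, Real.one_rpow] at h
    exact h
  -- rewrite q y * (M y / q y)^β = q y ^ (1-β) * M y ^ β
  have hrw : ∀ y, q y * (M y / q y) ^ β = q y ^ (1 - β) * M y ^ β := by
    intro y
    rw [Real.div_rpow (hM0 y) (hq y).le, Real.rpow_sub (hq y), Real.rpow_one]
    field_simp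
  calc (1:ℝ) ≤ ∑ y, q y * (M y / q y) ^ β := jensen2
    _ = ∑ y, q y ^ (1 - β) * M y ^ β := Finset.sum_congr rfl fun y _ => hrw y
    _ ≤ ∑ y, q y ^ (1 - β) * (∑ x, Pt x * W x y ^ α) ^ (β / α) :=
        Finset.sum_le_sum fun y _ => mul_le_mul_of_nonneg_left (step2 y)
          (Real.rpow_nonneg (hq y).le _)
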